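/- Let v_k : [0,∞) → [0,∞), for integers k ≥ 1, with ∑_{k ≥ 1} v_k(t) = 1 for every t ≥ 0, and set X(t,z) = ∑_{k ≥ 1} v_k(t) z^k. Let φ : [0,∞) → [0,∞) be locally integrable, and suppose that for every z ∈ (0,1) the function t ↦ X(t,z) is absolutely continuous with ∂_t X(t,z) = z · ∂_z X(t,z) · (X(t,z) − 1) + z · φ(t) for almost every t. Then for every t ≥ 0: ∑_{k ≥ 1} v_k(t)/k = ∑_{k ≥ 1} v_k(0)/k + ∫_0^t (φ(s) − 1/2) ds. -/

import Mathlib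

open MeasureTheory Set Filter Topology

private lemma ff14_bounds {f : ℝ → ℝ} {a : ℕ → ℝ} (hnn : ∀ k, 0 ≤ a k) (hs1 : HasSum a 1)
    (hf : ∀ z ∈ Icc (0:ℝ) 1, HasSum (fun k => a k * z ^ (k+1)) (f z)) :
    (∀ z ∈ Icc (0:ℝ) 1, 0 ≤ f z ∧ f z ≤ z) ∧ f 0 = 0 ∧ f 1 = 1 ∧
      (∀ z ∈ Icc (0:ℝ) 1, ∀ w ∈ Icc (0:ℝ) 1, z ≤ w → f z ≤ f w) := by
  refine ⟨fun z hz => ⟨?_, ?_⟩, ?_, ?_, ?_⟩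
  · exact (hf z hz).nonneg (fun k => mul_nonneg (hnn k) (pow_nonneg hz.1 _))
  · have h2 : HasSum (fun k : ℕ => a k * z) z := by simpa using hs1.mul_right z
    refine hasSum_le (fun k => ?_) (hf z hz) h2
    have : z ^ (k+1) ≤ z ^ 1 := pow_le_pow_of_le_one hz.1 hz.2 (Nat.one_le_iff_ne_zero.2 (Nat.succ_ne_zero k))
    rw [pow_one] at this
    exact mul_le_mul_of_nonneg_left this (hnn k)
  · have h0 : HasSum (fun _ : ℕ => (0:ℝ)) (f 0) := by
      have := hf 0 ⟨le_refl _, zero_le_one⟩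
      simpa using this
    simpa using h0.unique hasSum_zero
  · have h1 : HasSum a (f 1) := by
      have := hf 1 ⟨zero_le_one, le_refl _⟩
      simpa using this
    exact h1.unique hs1
  · intro z hz w hw hzw
    refine hasSum_le (fun k => ?_) (hf z hz) (hf w hw)
    exact mul_le_mul_of_nonneg_left (pow_le_pow_left₀ hz.1 hzw _) (hnn k)

private lemma ff14_cont {f : ℝ → ℝ} {a : ℕ → ℝ} (hnn : ∀ k, 0 ≤ a k) (hs1 : HasSum a 1)
    (hf : ∀ z ∈ Icc (0:ℝ) 1, HasSum (fun k => a k * z ^ (k+1)) (f z))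
    (hdiff : ∀ z ∈ Ioo (0:ℝ) 1, ContinuousWithinAt f (Ioo 0 1) z) :
    ContinuousOn f (Icc 0 1) := by
  obtain ⟨hb, hf0, hf1, hmono⟩ := ff14_bounds hnn hs1 hf
  intro z hz
  rcases eq_or_lt_of_le hz.1 with h0 | h0
  · -- z = 0
    subst h0
    rw [ContinuousWithinAt, hf0]
    apply squeeze_zero' (eventually_mem_nhdsWithin.mono fun w hw => (hb w hw).1)
      (eventually_mem_nhdsWithin.mono fun w hw => (hb w hw).2)
    exact tendsto_id.mono_left nhdsWithin_le_nhds
  rcases eq_or_lt_of_le hz.2 with h1 | h1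
  · -- z = 1
    subst h1
    rw [ContinuousWithinAt, hf1]
    rw [tendsto_order]
    constructor
    · intro b hb1
      obtain ⟨N, hN⟩ := ((hs1.tendsto_sum_nat).eventually (eventually_gt_nhds hb1)).exists
      have hP : Tendsto (fun w : ℝ => w ^ N * (∑ k ∈ Finset.range N, a k)) (𝓝[Icc 0 1] 1)
          (𝓝 (∑ k ∈ Finset.range N, a k)) := by
        have := (((continuous_pow N).tendsto (1:ℝ)).mono_left
          (nhdsWithin_le_nhds (s := Icc (0:ℝ) 1))).mul_const (∑ k ∈ Finset.range N, a k)
        simpa using this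
      filter_upwards [hP.eventually (eventually_gt_nhds hN), eventually_mem_nhdsWithin] with w hw1 hw2
      refine lt_of_lt_of_le hw1 ?_
      have hsum1 : ∑ k ∈ Finset.range N, a k * w ^ (k+1) ≤ f w :=
        sum_le_hasSum _ (fun k _ => mul_nonneg (hnn k) (pow_nonneg hw2.1 _)) (hf w hw2)
      refine le_trans ?_ hsum1
      rw [Finset.mul_sum]
      refine Finset.sum_le_sum fun k hk => ?_
      rw [mul_comm]
      exact mul_le_mul_of_nonneg_left
        (pow_le_pow_of_le_one hw2.1 hw2.2 (Finset.mem_range.1 hk)) (hnn k)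
    · intro b hb1
      filter_upwards [eventually_mem_nhdsWithin] with w hw
      exact lt_of_le_of_lt ((hb w hw).2) (lt_of_le_of_lt hw.2 hb1)
  · exact ((hdiff z ⟨h0, h1⟩).continuousAt (Ioo_mem_nhds h0 h1)).continuousWithinAt

set_option maxHeartbeats 2000000 in
theorem stmt14 (v : ℕ → ℝ → ℝ) (φ : ℝ → ℝ) (X Xz : ℝ → ℝ → ℝ)
    (hnn : ∀ k : ℕ, ∀ t : ℝ, 0 ≤ t → 0 ≤ v (k + 1) t)
    (hsum : ∀ t : ℝ, 0 ≤ t → HasSum (fun k => v (k + 1) t) 1)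
    (hX : ∀ t : ℝ, 0 ≤ t → ∀ z ∈ Set.Icc (0 : ℝ) 1,
      HasSum (fun k => v (k + 1) t * z ^ (k + 1)) (X t z))
    (hφnn : ∀ t : ℝ, 0 ≤ t → 0 ≤ φ t)
    (hφint : LocallyIntegrableOn φ (Set.Ici 0))
    (hXz : ∀ t : ℝ, 0 ≤ t → ∀ z ∈ Set.Ioo (0 : ℝ) 1,
      HasDerivWithinAt (fun w => X t w) (Xz t z) (Set.Ioo 0 1) z)
    (hint : ∀ z ∈ Set.Ioo (0 : ℝ) 1, ∀ t : ℝ, 0 ≤ t →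
      IntervalIntegrable (fun s => z * Xz s z * (X s z - 1) + z * φ s) volume 0 t)
    (hAC : ∀ z ∈ Set.Ioo (0 : ℝ) 1, ∀ t : ℝ, 0 ≤ t →
      X t z = X 0 z + ∫ s in (0 : ℝ)..t, (z * Xz s z * (X s z - 1) + z * φ s)) :
    ∀ t : ℝ, 0 ≤ t →
      ∑' k : ℕ, v (k + 1) t / ((k : ℝ) + 1) =
        (∑' k : ℕ, v (k + 1) 0 / ((k : ℝ) + 1)) + ∫ s in (0 : ℝ)..t, (φ s - 1 / 2) := by
  intro t ht
  -- basic per-time facts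
  have hbase : ∀ s : ℝ, 0 ≤ s → (∀ z ∈ Icc (0:ℝ) 1, 0 ≤ X s z ∧ X s z ≤ z) ∧ X s 0 = 0 ∧
      X s 1 = 1 ∧ (∀ z ∈ Icc (0:ℝ) 1, ∀ w ∈ Icc (0:ℝ) 1, z ≤ w → X s z ≤ X s w) :=
    fun s hs => ff14_bounds (fun k => hnn k s hs) (hsum s hs) (hX s hs)
  have hcontIcc : ∀ s : ℝ, 0 ≤ s → ContinuousOn (X s) (Icc 0 1) := fun s hs =>
    ff14_cont (fun k => hnn k s hs) (hsum s hs) (hX s hs)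
      (fun z hz => (hXz s hs z hz).continuousWithinAt)
  -- nonnegativity of the z-derivative
  have hXznn : ∀ s : ℝ, 0 ≤ s → ∀ z ∈ Ioo (0:ℝ) 1, 0 ≤ Xz s z := by
    intro s hs z hz
    have hslope := hasDerivWithinAt_iff_tendsto_slope.1 (hXz s hs z hz)
    have hδ : Tendsto (fun n : ℕ => (1 - z) / ((n:ℝ) + 2)) atTop (𝓝 0) := by
      have h2 : Tendsto (fun n : ℕ => ((n:ℝ) + 2)) atTop atTop :=
        tendsto_natCast_atTop_atTop.atTop_add tendsto_const_nhds
      exact Tendsto.div_atTop tendsto_const_nhds h2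
    have hmem : ∀ n : ℕ, z + (1 - z) / ((n:ℝ) + 2) ∈ Ioo (0:ℝ) 1 \ {z} := by
      intro n
      have hn2 : (0:ℝ) < (n:ℝ) + 2 := by positivity
      have h1 : 0 < (1 - z) / ((n:ℝ) + 2) := by
        apply div_pos (by linarith [hz.2]) hn2
      have h2 : (1 - z) / ((n:ℝ) + 2) < 1 - z := by
        rw [div_lt_iff₀ hn2]
        nlinarith [hz.2]
      exact ⟨⟨by linarith [hz.1], by linarith⟩,
        by simp only [mem_singleton_iff]; exact ne_of_gt (lt_add_of_pos_right z h1)⟩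
    have hseq : Tendsto (fun n : ℕ => z + (1 - z) / ((n:ℝ) + 2)) atTop
        (𝓝[Ioo (0:ℝ) 1 \ {z}] z) := by
      rw [tendsto_nhdsWithin_iff]
      constructor
      · simpa using tendsto_const_nhds.add hδ
      · exact Eventually.of_forall hmem
    have hcomp := hslope.comp hseq
    refine ge_of_tendsto' hcomp fun n => ?_
    have hn2 : (0:ℝ) < (n:ℝ) + 2 := by positivity
    have hpos : 0 < (1 - z) / ((n:ℝ) + 2) := div_pos (by linarith [hz.2]) hn2
    have hm := (hmem n).1
    rw [Function.comp_apply, slope_def_field]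
    apply div_nonneg _ (by linarith)
    have := (hbase s hs).2.2.2 z (Ioo_subset_Icc_self hz) _ (Ioo_subset_Icc_self hm) (by linarith)
    linarith
  -- integrability of φ on [0, τ]
  have hφInt : ∀ τ : ℝ, 0 ≤ τ → IntervalIntegrable φ volume 0 τ := by
    intro τ hτ
    rw [intervalIntegrable_iff_integrableOn_Icc_of_le hτ]
    exact hφint.integrableOn_compact_subset (fun x hx => hx.1) isCompact_Icc
  -- integrability of the combination and of Xz (1 - X)
  have hhInt : ∀ z ∈ Ioo (0:ℝ) 1, ∀ τ : ℝ, 0 ≤ τ →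
      IntervalIntegrable (fun s => Xz s z * (X s z - 1) + φ s) volume 0 τ := by
    intro z hz τ hτ
    have hz0 : z ≠ 0 := ne_of_gt hz.1
    have h := (hint z hz τ hτ).const_mul (1/z)
    have heq : (fun s => (1/z) * (z * Xz s z * (X s z - 1) + z * φ s)) =
        fun s => Xz s z * (X s z - 1) + φ s := by
      funext s; field_simp
    rwa [heq] at h
  have hGInt : ∀ z ∈ Ioo (0:ℝ) 1, ∀ τ : ℝ, 0 ≤ τ →
      IntervalIntegrable (fun s => Xz s z * (1 - X s z)) volume 0 τ := by
    intro z hz τ hτ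
    have h := (hφInt τ hτ).sub (hhInt z hz τ hτ)
    have heq : (fun s => φ s - (Xz s z * (X s z - 1) + φ s)) =
        fun s => Xz s z * (1 - X s z) := by funext s; ring
    rwa [heq] at h
  -- FTC in the z variable
  have hFTC : ∀ s : ℝ, 0 ≤ s → IntegrableOn (fun z => Xz s z * (1 - X s z)) (Ioc 0 1) volume ∧
      ∫ z in Ioo (0:ℝ) 1, Xz s z * (1 - X s z) = 1/2 := by
    intro s hs
    have hgc : ContinuousOn (fun w => X s w - X s w * X s w / 2) (Icc 0 1) :=
      (hcontIcc s hs).sub (((hcontIcc s hs).mul (hcontIcc s hs)).div_const 2)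
    have hgd : ∀ z ∈ Ioo (0:ℝ) 1,
        HasDerivWithinAt (fun w => X s w - X s w * X s w / 2) (Xz s z * (1 - X s z)) (Ioi z) z := by
      intro z hz
      have hmem : Ioo (0:ℝ) 1 ∈ 𝓝[Ioi z] z := by
        rw [mem_nhdsWithin]
        exact ⟨Iio 1, isOpen_Iio, hz.2, fun w hw => ⟨lt_trans hz.1 hw.2, hw.1⟩⟩
      have h1 : HasDerivWithinAt (X s) (Xz s z) (Ioi z) z :=
        (hXz s hs z hz).mono_of_mem_nhdsWithin hmem
      have h2 := h1.sub ((h1.mul h1).div_const 2)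
      refine h2.congr_deriv ?_
      ring
    have hnn' : ∀ z ∈ Ioo (0:ℝ) 1, 0 ≤ Xz s z * (1 - X s z) := by
      intro z hz
      have hb := ((hbase s hs).1 z (Ioo_subset_Icc_self hz)).2
      exact mul_nonneg (hXznn s hs z hz) (by linarith [hz.2])
    have hio := intervalIntegral.integrableOn_deriv_right_of_nonneg hgc hgd hnn'
    refine ⟨hio, ?_⟩
    have hval := intervalIntegral.integral_eq_sub_of_hasDeriv_right_of_le zero_le_one hgc hgd
      ((intervalIntegrable_iff_integrableOn_Ioc_of_le zero_le_one).2 hio)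
    rw [intervalIntegral.integral_of_le zero_le_one] at hval
    rw [setIntegral_congr_set Ioo_ae_eq_Ioc, hval, (hbase s hs).2.1, (hbase s hs).2.2.1]
    norm_num
  -- power series representation X s z = z * tsum
  have hW1 : ∀ s : ℝ, 0 ≤ s → ∀ z ∈ Ioo (0:ℝ) 1, X s z = z * ∑' k, v (k+1) s * z ^ k := by
    intro s hs z hz
    rw [← (hX s hs z (Ioo_subset_Icc_self hz)).tsum_eq, ← tsum_mul_left]
    exact tsum_congr fun k => by ring
  -- summability of the coefficient series against z^k
  have hSumm : ∀ s : ℝ, 0 ≤ s → ∀ z ∈ Icc (0:ℝ) 1, Summable (fun k => v (k+1) s * z ^ k) := by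
    intro s hs z hz
    refine Summable.of_nonneg_of_le (fun k => mul_nonneg (hnn k s hs) (pow_nonneg hz.1 _))
      (fun k => ?_) (hsum s hs).summable
    exact mul_le_of_le_one_right (hnn k s hs) (pow_le_one₀ hz.1 hz.2)
  -- key pointwise identity in z
  have hkey : ∀ z ∈ Ioo (0:ℝ) 1, (∑' k, v (k+1) t * z ^ k) = (∑' k, v (k+1) 0 * z ^ k) +
      ((∫ s in (0:ℝ)..t, φ s) - ∫ s in (0:ℝ)..t, Xz s z * (1 - X s z)) := by
    intro z hz
    have hz0 : z ≠ 0 := ne_of_gt hz.1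
    have h1 := hAC z hz t ht
    have h2 : ∫ s in (0:ℝ)..t, (z * Xz s z * (X s z - 1) + z * φ s) =
        z * ∫ s in (0:ℝ)..t, (Xz s z * (X s z - 1) + φ s) := by
      rw [← intervalIntegral.integral_const_mul]
      apply intervalIntegral.integral_congr
      intro s _; ring
    have h3 : ∫ s in (0:ℝ)..t, (Xz s z * (X s z - 1) + φ s) =
        (∫ s in (0:ℝ)..t, φ s) - ∫ s in (0:ℝ)..t, Xz s z * (1 - X s z) := by
      rw [← intervalIntegral.integral_sub (hφInt t ht) (hGInt z hz t ht)]
      apply intervalIntegral.integral_congr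
      intro s _; ring
    rw [h2, h3, hW1 t ht z hz, hW1 0 le_rfl z hz] at h1
    apply mul_left_cancel₀ hz0
    rw [h1]; ring
  -- ∫_{(0,1)} z^k dz = 1/(k+1)
  have hIpow : ∀ k : ℕ, ∫ z in Ioo (0:ℝ) 1, z ^ k = 1 / ((k:ℝ) + 1) := by
    intro k
    rw [setIntegral_congr_set Ioo_ae_eq_Ioc, ← intervalIntegral.integral_of_le zero_le_one,
      integral_pow]
    simp
  -- Tonelli for the series
  have hTon : ∀ s : ℝ, 0 ≤ s →
      (∫ z in Ioo (0:ℝ) 1, (∑' k, v (k+1) s * z ^ k)) = ∑' k, v (k+1) s / ((k:ℝ) + 1) := by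
    intro s hs
    have hInt : ∀ k : ℕ, Integrable (fun z => v (k+1) s * z ^ k)
        (volume.restrict (Ioo (0:ℝ) 1)) := by
      intro k
      exact ((continuous_const.mul (continuous_pow k)).integrableOn_Icc (μ := volume)
        (a := (0:ℝ)) (b := 1)).mono_set Ioo_subset_Icc_self
    have hNorm : ∀ k : ℕ, (∫ z in Ioo (0:ℝ) 1, ‖v (k+1) s * z ^ k‖) =
        v (k+1) s * (1 / ((k:ℝ) + 1)) := by
      intro k
      rw [setIntegral_congr_fun measurableSet_Ioo
        (fun z hz => Real.norm_of_nonneg (mul_nonneg (hnn k s hs) (pow_nonneg hz.1.le k))),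
        integral_const_mul, hIpow]
    have hSum : Summable (fun k => ∫ z in Ioo (0:ℝ) 1, ‖v (k+1) s * z ^ k‖) := by
      refine Summable.of_nonneg_of_le
        (fun k => integral_nonneg fun z => norm_nonneg _) (fun k => ?_) (hsum s hs).summable
      rw [hNorm k]
      refine mul_le_of_le_one_right (hnn k s hs) ?_
      rw [div_le_one (by positivity)]
      linarith [Nat.cast_nonneg (α := ℝ) k]
    have h := integral_tsum_of_summable_integral_norm hInt hSum
    rw [← h]
    refine tsum_congr fun k => ?_
    rw [integral_const_mul, hIpow, mul_one_div]
  -- integrability of the series sum on (0,1)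
  have hTonInt : ∀ s : ℝ, 0 ≤ s →
      IntegrableOn (fun z => ∑' k, v (k+1) s * z ^ k) (Ioo 0 1) volume := by
    intro s hs
    have hWc : ContinuousOn (fun z => ∑' k, v (k+1) s * z ^ k) (Ioo 0 1) := by
      have hXc : ContinuousOn (fun z => X s z / z) (Ioo 0 1) :=
        ((hcontIcc s hs).mono Ioo_subset_Icc_self).div continuousOn_id
          (fun z hz => ne_of_gt hz.1)
      refine ContinuousOn.congr hXc fun z hz => ?_
      rw [hW1 s hs z hz, mul_div_cancel_left₀ _ (ne_of_gt hz.1)]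
    refine Integrable.mono' (g := fun _ => (1:ℝ))
      (integrableOn_const (by simp [Real.volume_Ioo]))
      (hWc.aestronglyMeasurable measurableSet_Ioo) ?_
    filter_upwards [ae_restrict_mem measurableSet_Ioo] with z hz
    rw [Real.norm_of_nonneg (tsum_nonneg fun k => mul_nonneg (hnn k s hs) (pow_nonneg hz.1.le _))]
    calc (∑' k, v (k+1) s * z ^ k) ≤ ∑' k, v (k+1) s := by
          refine Summable.tsum_le_tsum (fun k => ?_) (hSumm s hs z (Ioo_subset_Icc_self hz))
            (hsum s hs).summable
          exact mul_le_of_le_one_right (hnn k s hs) (pow_le_one₀ hz.1.le hz.2.le)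
      _ = 1 := (hsum s hs).tsum_eq
  -- continuity in the time variable
  have hcontS : ∀ w ∈ Icc (0:ℝ) 1, ContinuousOn (fun s => X s w) (Ici 0) := by
    intro w hw
    rcases eq_or_lt_of_le hw.1 with h0 | h0
    · exact continuousOn_const.congr fun s hs => by rw [← h0, (hbase s hs).2.1]
    rcases eq_or_lt_of_le hw.2 with h1 | h1
    · exact continuousOn_const.congr fun s hs => by rw [h1, (hbase s hs).2.2.1]
    have hwIoo : w ∈ Ioo (0:ℝ) 1 := ⟨h0, h1⟩
    intro s₀ hs₀
    have hs₀' : (0:ℝ) ≤ s₀ + 1 := by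
      simp only [mem_Ici] at hs₀; linarith
    have hicc : IntegrableOn (fun s => w * Xz s w * (X s w - 1) + w * φ s)
        (uIcc (0:ℝ) (s₀ + 1)) volume := by
      rw [uIcc_of_le hs₀']
      exact (intervalIntegrable_iff_integrableOn_Icc_of_le hs₀').1 (hint w hwIoo (s₀+1) hs₀')
    have hprim := intervalIntegral.continuousOn_primitive_interval hicc
    have hcc : ContinuousOn (fun s => X 0 w +
        ∫ u in (0:ℝ)..s, (w * Xz u w * (X u w - 1) + w * φ u)) (uIcc (0:ℝ) (s₀+1)) :=
      continuousOn_const.add hprim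
    have hcc2 : ContinuousOn (fun s => X s w) (Icc (0:ℝ) (s₀+1)) := by
      rw [uIcc_of_le hs₀'] at hcc
      exact hcc.congr fun s hs => hAC w hwIoo s hs.1
    have hmem : Icc (0:ℝ) (s₀+1) ∈ 𝓝[Ici 0] s₀ := by
      have : Icc (0:ℝ) (s₀+1) = Ici 0 ∩ Iic (s₀+1) := (Ici_inter_Iic).symm
      rw [this]
      exact Filter.inter_mem self_mem_nhdsWithin
        (mem_nhdsWithin_of_mem_nhds (Iic_mem_nhds (by simp only [mem_Ici] at hs₀; linarith)))
    exact (hcc2.continuousWithinAt ⟨hs₀, by simp only [mem_Ici] at hs₀; linarith⟩).mono_of_mem_nhdsWithin hmem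
  -- the clamped function and its joint measurability
  have hJmeas : Measurable (Function.uncurry
      (fun z s => X (max s 0) (max 0 (min z 1)) : ℝ → ℝ → ℝ)) := by
    apply measurable_uncurry_of_continuous_of_measurable
    · intro s
      have hcl : Continuous (fun z : ℝ => max 0 (min z 1)) :=
        continuous_const.max (continuous_id.min continuous_const)
      refine (hcontIcc (max s 0) (le_max_right s 0)).comp_continuous hcl fun z => ?_
      exact ⟨le_max_left _ _, max_le zero_le_one (min_le_right _ _)⟩
    · intro z
      have hcl : max 0 (min z 1) ∈ Icc (0:ℝ) 1 :=
        ⟨le_max_left _ _, max_le zero_le_one (min_le_right _ _)⟩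
      exact ((hcontS _ hcl).comp_continuous (continuous_id.max continuous_const)
        fun s => le_max_right s 0).measurable
  -- product measure
  set μ1 := volume.restrict (Ioo (0:ℝ) 1) with hμ1
  set μ2 := volume.restrict (Ioc (0:ℝ) t) with hμ2
  have hPrestrict : μ1.prod μ2 = (volume.prod volume).restrict ((Ioo (0:ℝ) 1) ×ˢ (Ioc (0:ℝ) t)) :=
    Measure.prod_restrict _ _
  have hGmeas : AEMeasurable (fun p : ℝ × ℝ => Xz p.2 p.1 * (1 - X p.2 p.1)) (μ1.prod μ2) := by
    set J : ℝ × ℝ → ℝ := Function.uncurry (fun z s => X (max s 0) (max 0 (min z 1)) : ℝ → ℝ → ℝ)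
      with hJdef
    have hrm : ∀ n : ℕ, Measurable (fun p : ℝ × ℝ =>
        (((n:ℝ)+1) * (J (p.1 + 1/((n:ℝ)+1), p.2) - J p)) * (1 - J p)) := by
      intro n
      have h1 : Measurable (fun p : ℝ × ℝ => J (p.1 + 1/((n:ℝ)+1), p.2)) :=
        hJmeas.comp ((measurable_fst.add_const _).prodMk measurable_snd)
      exact ((measurable_const.mul (h1.sub hJmeas)).mul (measurable_const.sub hJmeas))
    apply aemeasurable_of_tendsto_metrizable_ae atTop (fun n => (hrm n).aemeasurable)
    rw [hPrestrict, ae_restrict_iff' (measurableSet_Ioo.prod measurableSet_Ioc)]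
    refine ae_of_all _ ?_
    rintro ⟨z, s⟩ ⟨hz, hs⟩
    have hs0 : (0:ℝ) ≤ s := hs.1.le
    have hJat : ∀ w ∈ Icc (0:ℝ) 1, J (w, s) = X s w := by
      intro w hw
      simp only [J, Function.uncurry]
      rw [max_eq_left hs0, min_eq_left hw.2, max_eq_right hw.1]
    have hslope := hasDerivWithinAt_iff_tendsto_slope.1 (hXz s hs0 z hz)
    have hδ0 : Tendsto (fun n : ℕ => 1/((n:ℝ)+1)) atTop (𝓝 0) := tendsto_one_div_add_atTop_nhds_zero_nat
    have hev : ∀ᶠ n : ℕ in atTop, 1/((n:ℝ)+1) < 1 - z :=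
      hδ0.eventually (eventually_lt_nhds (by linarith [hz.2]))
    have hseq : Tendsto (fun n : ℕ => z + 1/((n:ℝ)+1)) atTop (𝓝[Ioo (0:ℝ) 1 \ {z}] z) := by
      rw [tendsto_nhdsWithin_iff]
      constructor
      · simpa using tendsto_const_nhds.add hδ0
      · filter_upwards [hev] with n hn
        have hp : (0:ℝ) < 1/((n:ℝ)+1) := by positivity
        refine ⟨⟨by linarith [hz.1], by linarith⟩, ?_⟩
        simp only [mem_singleton_iff]
        exact ne_of_gt (lt_add_of_pos_right z hp)
    have h1 : Tendsto (fun n : ℕ => slope (X s) z (z + 1/((n:ℝ)+1)) * (1 - X s z)) atTop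
        (𝓝 (Xz s z * (1 - X s z))) := (hslope.comp hseq).mul_const _
    refine Tendsto.congr' ?_ h1
    filter_upwards [hev] with n hn
    have hp : (0:ℝ) < 1/((n:ℝ)+1) := by positivity
    have hn1 : ((n:ℝ)+1) ≠ 0 := by positivity
    have hmemz : z + 1/((n:ℝ)+1) ∈ Icc (0:ℝ) 1 := ⟨by linarith [hz.1], by linarith⟩
    rw [hJat _ hmemz, hJat z (Ioo_subset_Icc_self hz), slope_def_field]
    have : z + 1/((n:ℝ)+1) - z = 1/((n:ℝ)+1) := by ring
    rw [this]
    field_simp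
  have hGnn : ∀ p : ℝ × ℝ, p ∈ (Ioo (0:ℝ) 1) ×ˢ (Ioc (0:ℝ) t) →
      0 ≤ Xz p.2 p.1 * (1 - X p.2 p.1) := by
    rintro ⟨z, s⟩ ⟨hz, hs⟩
    have hb := ((hbase s hs.1.le).1 z (Ioo_subset_Icc_self hz)).2
    exact mul_nonneg (hXznn s hs.1.le z hz) (by linarith [hz.2])
  have hGnnae : 0 ≤ᵐ[μ1.prod μ2] fun p : ℝ × ℝ => Xz p.2 p.1 * (1 - X p.2 p.1) := by
    rw [hPrestrict, EventuallyLE, ae_restrict_iff' (measurableSet_Ioo.prod measurableSet_Ioc)]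
    exact ae_of_all _ hGnn
  have hGIntP : Integrable (fun p : ℝ × ℝ => Xz p.2 p.1 * (1 - X p.2 p.1)) (μ1.prod μ2) := by
    refine ⟨hGmeas.aestronglyMeasurable, ?_⟩
    rw [hasFiniteIntegral_iff_ofReal hGnnae]
    have hmeas2 : AEMeasurable (fun p : ℝ × ℝ =>
        ENNReal.ofReal (Xz p.2 p.1 * (1 - X p.2 p.1))) (μ1.prod μ2) :=
      ENNReal.measurable_ofReal.comp_aemeasurable hGmeas
    rw [lintegral_prod_symm _ hmeas2]
    have hinner : ∀ᵐ s ∂μ2, (∫⁻ z, ENNReal.ofReal (Xz s z * (1 - X s z)) ∂μ1)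
        = ENNReal.ofReal (1/2) := by
      rw [hμ2]
      filter_upwards [ae_restrict_mem measurableSet_Ioc] with s hs
      have hint1 : IntegrableOn (fun z => Xz s z * (1 - X s z)) (Ioo 0 1) volume :=
        (hFTC s hs.1.le).1.mono_set Ioo_subset_Ioc_self
      rw [← ofReal_integral_eq_lintegral_ofReal hint1 ?_, (hFTC s hs.1.le).2]
      filter_upwards [ae_restrict_mem measurableSet_Ioo] with z hz
      have hb := ((hbase s hs.1.le).1 z (Ioo_subset_Icc_self hz)).2
      exact mul_nonneg (hXznn s hs.1.le z hz) (by linarith [hz.2])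
    rw [lintegral_congr_ae hinner, lintegral_const]
    rw [hμ2, Measure.restrict_apply_univ, Real.volume_Ioc]
    exact ENNReal.mul_lt_top ENNReal.ofReal_lt_top ENNReal.ofReal_lt_top
  -- Fubini
  have hswap := MeasureTheory.integral_integral_swap
    (f := fun z s => Xz s z * (1 - X s z)) (μ := μ1) (ν := μ2) hGIntP
  have hKint : Integrable (fun z => ∫ s in (0:ℝ)..t, Xz s z * (1 - X s z)) μ1 := by
    have h := hGIntP.integral_prod_left
    refine h.congr (ae_of_all _ fun z => ?_)
    simp only [intervalIntegral.integral_of_le ht, hμ2]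
  have hKval : ∫ z in Ioo (0:ℝ) 1, (∫ s in (0:ℝ)..t, Xz s z * (1 - X s z)) = t/2 := by
    have h1 : (∫ z in Ioo (0:ℝ) 1, (∫ s in (0:ℝ)..t, Xz s z * (1 - X s z)))
        = ∫ z, (∫ s, Xz s z * (1 - X s z) ∂μ2) ∂μ1 := by
      refine integral_congr_ae (ae_of_all _ fun z => ?_)
      simp only [intervalIntegral.integral_of_le ht, hμ2]
    rw [h1, hswap]
    have h2 : ∫ s, (∫ z, Xz s z * (1 - X s z) ∂μ1) ∂μ2 = ∫ s in Ioc (0:ℝ) t, (1/2 : ℝ) := by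
      rw [hμ2]
      refine setIntegral_congr_fun measurableSet_Ioc fun s hs => ?_
      exact (hFTC s hs.1.le).2
    rw [h2, setIntegral_const, Real.volume_real_Ioc_of_le ht, smul_eq_mul]
    ring
  -- final assembly
  have hsub : (∫ z in Ioo (0:ℝ) 1, (∑' k, v (k+1) t * z ^ k)) -
      (∫ z in Ioo (0:ℝ) 1, (∑' k, v (k+1) 0 * z ^ k)) = (∫ s in (0:ℝ)..t, φ s) - t/2 := by
    rw [← integral_sub (hTonInt t ht) (hTonInt 0 le_rfl)]
    have heq : EqOn (fun z => (∑' k, v (k+1) t * z ^ k) - (∑' k, v (k+1) 0 * z ^ k))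
        (fun z => (∫ s in (0:ℝ)..t, φ s) - (∫ s in (0:ℝ)..t, Xz s z * (1 - X s z)))
        (Ioo 0 1) := by
      intro z hz
      have := hkey z hz
      simp only
      linarith
    rw [setIntegral_congr_fun measurableSet_Ioo heq]
    rw [integral_sub (show IntegrableOn (fun _ => ∫ s in (0:ℝ)..t, φ s) (Ioo (0:ℝ) 1) volume from
      integrableOn_const (by simp [Real.volume_Ioo])) hKint]
    rw [setIntegral_const, Real.volume_real_Ioo_of_le zero_le_one, hKval]
    norm_num
  have hRHS : ∫ s in (0:ℝ)..t, (φ s - 1/2) = (∫ s in (0:ℝ)..t, φ s) - t/2 := by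
    rw [intervalIntegral.integral_sub (hφInt t ht) intervalIntegrable_const,
      intervalIntegral.integral_const]
    rw [smul_eq_mul]; ring
  rw [hRHS, ← hTon t ht, ← hTon 0 le_rfl]
  linarith [hsub]
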